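/- Let (X,f) and (Y,g) be minimal topological dynamical systems on compact metric spaces, and suppose there exist points x ∈ X and y ∈ Y such that for every strictly increasing sequence (n_k) of natural numbers, (f^{n_k}x) converges in X if and only if (g^{n_k}y) converges in Y. Then (X,f) and (Y,g) are topologically conjugate. -/

import Mathlib

open Filter Topology

/-- Sequences converging at rate `1/(j+1)` converge. -/
private lemma tendsto_of_dist_lt_inv {X : Type*} [MetricSpace X] {w : ℕ → X} {a : X}
    (h : ∀ j : ℕ, dist (w j) a < 1 / (j + 1)) : Tendsto w atTop (nhds a) := by
  rw [Metric.tendsto_atTop]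
  intro ε hε
  obtain ⟨N, hN⟩ := exists_nat_one_div_lt hε
  refine ⟨N, fun k hk => ?_⟩
  calc dist (w k) a < 1 / (k + 1) := h k
    _ ≤ 1 / (N + 1) := by
        apply one_div_le_one_div_of_le (by positivity)
        exact_mod_cast Nat.succ_le_succ hk
    _ < ε := hN

/-- From a frequently-close condition extract a strictly monotone convergent subsequence. -/
private lemma freq_to_seq {X : Type*} [MetricSpace X] {u : ℕ → X} {a : X}
    (h : ∀ ε > 0, ∃ᶠ k in atTop, dist (u k) a < ε) :
    ∃ φ : ℕ → ℕ, StrictMono φ ∧ Tendsto (fun k => u (φ k)) atTop (nhds a) := by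
  obtain ⟨φ, hφ, hd⟩ := Filter.extraction_forall_of_frequently
    (P := fun n k => dist (u k) a < 1 / (n + 1)) (fun n => h _ (by positivity))
  exact ⟨φ, hφ, tendsto_of_dist_lt_inv hd⟩

/-- A convergent subsequence gives a frequently-close condition. -/
private lemma seq_to_freq {X : Type*} [MetricSpace X] {u : ℕ → X} {a : X} {φ : ℕ → ℕ}
    (hφ : StrictMono φ) (h : Tendsto (fun k => u (φ k)) atTop (nhds a)) :
    ∀ ε > 0, ∃ᶠ k in atTop, dist (u k) a < ε := by
  intro ε hε
  rw [Filter.frequently_atTop]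
  intro N
  obtain ⟨J, hJ⟩ := Metric.tendsto_atTop.1 h ε hε
  exact ⟨φ (max J N), le_trans (le_max_right J N) hφ.le_apply, hJ _ (le_max_left J N)⟩

/-- Totality of the limit relation. -/
private lemma key_total {X Y : Type*} [MetricSpace X] [MetricSpace Y]
    (u : ℕ → X) (v : ℕ → Y) (a : X)
    (htt : ∀ n : ℕ → ℕ, StrictMono n →
      ((∃ a : X, Tendsto (fun k => u (n k)) atTop (nhds a)) ↔
       (∃ b : Y, Tendsto (fun k => v (n k)) atTop (nhds b))))
    (ha : ∀ ε > 0, ∃ᶠ k in atTop, dist (u k) a < ε) :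
    ∃ b : Y, ∀ ε > 0, ∃ᶠ k in atTop, dist (u k) a < ε ∧ dist (v k) b < ε := by
  obtain ⟨φ, hφ, hu⟩ := freq_to_seq ha
  obtain ⟨b, hv⟩ := (htt φ hφ).1 ⟨a, hu⟩
  refine ⟨b, fun ε hε => ?_⟩
  rw [Filter.frequently_atTop]
  intro N
  obtain ⟨J1, hJ1⟩ := Metric.tendsto_atTop.1 hu ε hε
  obtain ⟨J2, hJ2⟩ := Metric.tendsto_atTop.1 hv ε hε
  refine ⟨φ (max (max J1 J2) N), le_trans (le_max_right _ N) hφ.le_apply,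
    hJ1 _ (le_trans (le_max_left J1 J2) (le_max_left _ N)),
    hJ2 _ (le_trans (le_max_right J1 J2) (le_max_left _ N))⟩

/-- Single-valuedness of the limit relation. -/
private lemma key_unique {X Y : Type*} [MetricSpace X] [MetricSpace Y]
    {u : ℕ → X} {v : ℕ → Y} {a : X} {b c : Y}
    (htt : ∀ n : ℕ → ℕ, StrictMono n →
      ((∃ a : X, Tendsto (fun k => u (n k)) atTop (nhds a)) ↔
       (∃ b : Y, Tendsto (fun k => v (n k)) atTop (nhds b))))
    (hb : ∀ ε > 0, ∃ᶠ k in atTop, dist (u k) a < ε ∧ dist (v k) b < ε)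
    (hc : ∀ ε > 0, ∃ᶠ k in atTop, dist (u k) a < ε ∧ dist (v k) c < ε) :
    b = c := by
  obtain ⟨φ, hφ, hP⟩ := Filter.extraction_forall_of_frequently
    (P := fun j k => dist (u k) a < 1 / (j + 1) ∧
      dist (v k) (if Even j then b else c) < 1 / (j + 1))
    (fun j => by
      rcases Nat.even_or_odd j with hj | hj
      · simpa [hj] using hb (1 / (j + 1)) (by positivity)
      · simpa [Nat.not_even_iff_odd.2 hj] using hc (1 / (j + 1)) (by positivity))
  have hu : Tendsto (fun k => u (φ k)) atTop (nhds a) :=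
    tendsto_of_dist_lt_inv (fun j => (hP j).1)
  obtain ⟨d, hv⟩ := (htt φ hφ).1 ⟨a, hu⟩
  have h2 : Tendsto (fun j : ℕ => 2 * j) atTop atTop :=
    tendsto_atTop_mono (fun j => by simp only [id_eq]; omega) tendsto_id
  have h3 : Tendsto (fun j : ℕ => 2 * j + 1) atTop atTop :=
    tendsto_atTop_mono (fun j => by simp only [id_eq]; omega) tendsto_id
  have hbd : b = d := by
    have heven : Tendsto (fun j : ℕ => v (φ (2 * j))) atTop (nhds b) := by
      apply tendsto_of_dist_lt_inv
      intro j
      have := (hP (2 * j)).2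
      rw [if_pos (even_two_mul j)] at this
      refine this.trans_le ?_
      apply one_div_le_one_div_of_le (by positivity)
      push_cast
      linarith
    have heven' : Tendsto (fun j : ℕ => v (φ (2 * j))) atTop (nhds d) := hv.comp h2
    exact tendsto_nhds_unique heven heven'
  have hcd : c = d := by
    have hodd : Tendsto (fun j : ℕ => v (φ (2 * j + 1))) atTop (nhds c) := by
      apply tendsto_of_dist_lt_inv
      intro j
      have := (hP (2 * j + 1)).2
      rw [if_neg (by simp [Nat.even_add_one, Nat.not_even_iff_odd])] at this
      refine this.trans_le ?_
      apply one_div_le_one_div_of_le (by positivity)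
      push_cast
      linarith
    have hodd' : Tendsto (fun j : ℕ => v (φ (2 * j + 1))) atTop (nhds d) := hv.comp h3
    exact tendsto_nhds_unique hodd hodd'
  rw [hbd, hcd]

/-- In a minimal system on a compact metric space, every point is an `ω`-limit
point of every forward orbit. -/
private lemma dense_omega {X : Type*} [MetricSpace X] [CompactSpace X] (f : X ≃ₜ X)
    (hmin : ∀ x : X, Dense (Set.range fun n : ℤ => (f.toEquiv ^ n) x)) (x : X) :
    ∀ a : X, ∀ ε > 0, ∃ᶠ k in atTop, dist ((⇑f)^[k] x) a < ε := by
  set P : X → Prop := fun a => ∀ ε > 0, ∃ᶠ k in atTop, dist ((⇑f)^[k] x) a < ε with hPdef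
  have hstep : ∀ a, P a → P (f a) := by
    intro a ha ε hε
    obtain ⟨δ, hδ, hδ'⟩ := Metric.uniformContinuous_iff.1
      (CompactSpace.uniformContinuous_of_continuous f.continuous) ε hε
    rw [Filter.frequently_atTop]
    intro N
    obtain ⟨k, hk, hdk⟩ := Filter.frequently_atTop.1 (ha δ hδ) N
    refine ⟨k + 1, by omega, ?_⟩
    rw [Function.iterate_succ_apply']
    exact hδ' hdk
  have hstep' : ∀ a, P a → P (f.symm a) := by
    intro a ha ε hε
    obtain ⟨δ, hδ, hδ'⟩ := Metric.uniformContinuous_iff.1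
      (CompactSpace.uniformContinuous_of_continuous f.symm.continuous) ε hε
    rw [Filter.frequently_atTop]
    intro N
    obtain ⟨k, hk, hdk⟩ := Filter.frequently_atTop.1 (ha δ hδ) (N + 1)
    obtain ⟨k', rfl⟩ : ∃ k', k = k' + 1 := ⟨k - 1, by omega⟩
    refine ⟨k', by omega, ?_⟩
    have hkey : f.symm ((⇑f)^[k' + 1] x) = (⇑f)^[k'] x := by
      rw [Function.iterate_succ_apply']
      exact f.symm_apply_apply _
    calc dist ((⇑f)^[k'] x) (f.symm a)
        = dist (f.symm ((⇑f)^[k' + 1] x)) (f.symm a) := by rw [hkey]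
      _ < ε := hδ' hdk
  obtain ⟨a0, φ, hφ, htd⟩ := CompactSpace.tendsto_subseq (fun k => (⇑f)^[k] x)
  have ha0 : P a0 := seq_to_freq hφ htd
  have hz : ∀ m : ℤ, P ((f.toEquiv ^ m) a0) := by
    intro m
    induction m using Int.induction_on with
    | zero => simpa using ha0
    | succ i hi =>
        have h1 : (f.toEquiv ^ ((i : ℤ) + 1)) a0 = f ((f.toEquiv ^ (i : ℤ)) a0) := by
          rw [add_comm, zpow_add, zpow_one]
          rfl
        rw [h1]
        exact hstep _ hi
    | pred i hi =>
        have h1 : (f.toEquiv ^ (-(i : ℤ) - 1)) a0 = f.symm ((f.toEquiv ^ (-(i : ℤ))) a0) := by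
          rw [sub_eq_neg_add, zpow_add, zpow_neg_one]
          rfl
        rw [h1]
        exact hstep' _ hi
  have hclose : ∀ a : X, (∀ ε > 0, ∃ b, P b ∧ dist a b < ε) → P a := by
    intro a h ε hε
    obtain ⟨b, hb, hab⟩ := h (ε / 2) (by linarith)
    refine (hb (ε / 2) (by linarith)).mono fun k hk => ?_
    calc dist ((⇑f)^[k] x) a ≤ dist ((⇑f)^[k] x) b + dist b a := dist_triangle _ _ _
      _ < ε / 2 + ε / 2 := add_lt_add hk (by rwa [dist_comm])
      _ = ε := by ring
  intro a
  apply hclose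
  intro ε hε
  obtain ⟨b, hbmem, hab⟩ := Metric.mem_closure_iff.1 (hmin a0 a) ε hε
  obtain ⟨m, rfl⟩ := hbmem
  exact ⟨_, hz m, hab⟩

/-- If two minimal systems have points whose forward orbit sequences have the
same convergent subsequences, then the systems are topologically conjugate. -/
theorem conjugate_of_same_convergent_subsequences {X Y : Type*}
    [MetricSpace X] [CompactSpace X] [MetricSpace Y] [CompactSpace Y]
    (f : X ≃ₜ X) (g : Y ≃ₜ Y)
    (hXmin : ∀ x : X, Dense (Set.range fun n : ℤ => (f.toEquiv ^ n) x))
    (hYmin : ∀ y : Y, Dense (Set.range fun n : ℤ => (g.toEquiv ^ n) y))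
    (x : X) (y : Y)
    (htt : ∀ n : ℕ → ℕ, StrictMono n →
      ((∃ a : X, Filter.Tendsto (fun k => (⇑f)^[n k] x) Filter.atTop (nhds a)) ↔
       (∃ b : Y, Filter.Tendsto (fun k => (⇑g)^[n k] y) Filter.atTop (nhds b)))) :
    ∃ h : X ≃ₜ Y, ∀ x' : X, h (f x') = g (h x') := by
  classical
  have htt' : ∀ n : ℕ → ℕ, StrictMono n →
      ((∃ b : Y, Tendsto (fun k => (⇑g)^[n k] y) atTop (nhds b)) ↔
       (∃ a : X, Tendsto (fun k => (⇑f)^[n k] x) atTop (nhds a))) :=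
    fun n hn => (htt n hn).symm
  have hPf : ∀ a : X, ∀ ε > 0, ∃ᶠ k in atTop, dist ((⇑f)^[k] x) a < ε :=
    dense_omega f hXmin x
  have hPg : ∀ b : Y, ∀ ε > 0, ∃ᶠ k in atTop, dist ((⇑g)^[k] y) b < ε :=
    dense_omega g hYmin y
  -- the relation `Rel a b` is
  -- `∀ ε > 0, ∃ᶠ k in atTop, dist (f^[k] x) a < ε ∧ dist (g^[k] y) b < ε`
  have htot : ∀ a : X, ∃ b : Y,
      ∀ ε > 0, ∃ᶠ k in atTop, dist ((⇑f)^[k] x) a < ε ∧ dist ((⇑g)^[k] y) b < ε :=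
    fun a => key_total (fun k => (⇑f)^[k] x) (fun k => (⇑g)^[k] y) a htt (hPf a)
  have htot' : ∀ b : Y, ∃ a : X,
      ∀ ε > 0, ∃ᶠ k in atTop, dist ((⇑f)^[k] x) a < ε ∧ dist ((⇑g)^[k] y) b < ε := by
    intro b
    obtain ⟨a, ha⟩ := key_total (fun k => (⇑g)^[k] y) (fun k => (⇑f)^[k] x) b htt' (hPg b)
    exact ⟨a, fun ε hε => (ha ε hε).mono fun k hk => ⟨hk.2, hk.1⟩⟩
  have huniq : ∀ (a : X) (b c : Y),
      (∀ ε > 0, ∃ᶠ k in atTop, dist ((⇑f)^[k] x) a < ε ∧ dist ((⇑g)^[k] y) b < ε) →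
      (∀ ε > 0, ∃ᶠ k in atTop, dist ((⇑f)^[k] x) a < ε ∧ dist ((⇑g)^[k] y) c < ε) →
      b = c :=
    fun a b c hb hc => key_unique htt hb hc
  have huniq' : ∀ (a b : X) (c : Y),
      (∀ ε > 0, ∃ᶠ k in atTop, dist ((⇑f)^[k] x) a < ε ∧ dist ((⇑g)^[k] y) c < ε) →
      (∀ ε > 0, ∃ᶠ k in atTop, dist ((⇑f)^[k] x) b < ε ∧ dist ((⇑g)^[k] y) c < ε) →
      a = b :=
    fun a b c hac hbc => key_unique htt'
      (fun ε hε => (hac ε hε).mono fun k hk => ⟨hk.2, hk.1⟩)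
      (fun ε hε => (hbc ε hε).mono fun k hk => ⟨hk.2, hk.1⟩)
  set H : X → Y := fun a => Classical.choose (htot a) with hHdef
  have hH : ∀ a : X,
      ∀ ε > 0, ∃ᶠ k in atTop, dist ((⇑f)^[k] x) a < ε ∧ dist ((⇑g)^[k] y) (H a) < ε :=
    fun a => Classical.choose_spec (htot a)
  set K : Y → X := fun b => Classical.choose (htot' b) with hKdef
  have hK : ∀ b : Y,
      ∀ ε > 0, ∃ᶠ k in atTop, dist ((⇑f)^[k] x) (K b) < ε ∧ dist ((⇑g)^[k] y) b < ε :=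
    fun b => Classical.choose_spec (htot' b)
  have hleft : ∀ a : X, K (H a) = a := fun a => huniq' _ _ _ (hK (H a)) (hH a)
  have hright : ∀ b : Y, H (K b) = b := fun b => huniq _ _ _ (hH (K b)) (hK b)
  -- the relation is closed
  have hclosedR : ∀ (a : X) (b : Y),
      (∀ ε > 0, ∃ (a' : X) (b' : Y),
        (∀ ε' > 0, ∃ᶠ k in atTop, dist ((⇑f)^[k] x) a' < ε' ∧ dist ((⇑g)^[k] y) b' < ε') ∧
        dist a' a < ε ∧ dist b' b < ε) →
      ∀ ε > 0, ∃ᶠ k in atTop, dist ((⇑f)^[k] x) a < ε ∧ dist ((⇑g)^[k] y) b < ε := by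
    intro a b h ε hε
    obtain ⟨a', b', hR, ha', hb'⟩ := h (ε / 2) (by linarith)
    refine (hR (ε / 2) (by linarith)).mono fun k hk => ⟨?_, ?_⟩
    · calc dist ((⇑f)^[k] x) a ≤ dist ((⇑f)^[k] x) a' + dist a' a := dist_triangle _ _ _
        _ < ε / 2 + ε / 2 := add_lt_add hk.1 ha'
        _ = ε := by ring
    · calc dist ((⇑g)^[k] y) b ≤ dist ((⇑g)^[k] y) b' + dist b' b := dist_triangle _ _ _
        _ < ε / 2 + ε / 2 := add_lt_add hk.2 hb'
        _ = ε := by ring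
  -- equivariance of the relation
  have hshift : ∀ (a : X) (b : Y),
      (∀ ε > 0, ∃ᶠ k in atTop, dist ((⇑f)^[k] x) a < ε ∧ dist ((⇑g)^[k] y) b < ε) →
      ∀ ε > 0, ∃ᶠ k in atTop, dist ((⇑f)^[k] x) (f a) < ε ∧ dist ((⇑g)^[k] y) (g b) < ε := by
    intro a b hab ε hε
    obtain ⟨δ1, hδ1, h1⟩ := Metric.uniformContinuous_iff.1
      (CompactSpace.uniformContinuous_of_continuous f.continuous) ε hε
    obtain ⟨δ2, hδ2, h2⟩ := Metric.uniformContinuous_iff.1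
      (CompactSpace.uniformContinuous_of_continuous g.continuous) ε hε
    rw [Filter.frequently_atTop]
    intro N
    obtain ⟨k, hk, hk1, hk2⟩ := Filter.frequently_atTop.1
      (hab (min δ1 δ2) (lt_min hδ1 hδ2)) N
    refine ⟨k + 1, by omega, ?_, ?_⟩
    · rw [Function.iterate_succ_apply']
      exact h1 (lt_of_lt_of_le hk1 (min_le_left _ _))
    · rw [Function.iterate_succ_apply']
      exact h2 (lt_of_lt_of_le hk2 (min_le_right _ _))
  have hHf : ∀ a : X, H (f a) = g (H a) :=
    fun a => huniq (f a) _ _ (hH (f a)) (hshift a (H a) (hH a))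
  -- continuity of H
  have hcont : Continuous H := by
    rw [continuous_iff_seqContinuous]
    intro w a hw
    apply tendsto_of_subseq_tendsto
    intro ns hns
    obtain ⟨c, φ, hφ, hc⟩ := CompactSpace.tendsto_subseq (fun n => H (w (ns n)))
    refine ⟨φ, ?_⟩
    have h1 : Tendsto (fun n => w (ns (φ n))) atTop (nhds a) :=
      hw.comp (hns.comp hφ.tendsto_atTop)
    have hRac : ∀ ε > 0, ∃ᶠ k in atTop,
        dist ((⇑f)^[k] x) a < ε ∧ dist ((⇑g)^[k] y) c < ε := by
      apply hclosedR
      intro ε hε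
      obtain ⟨N1, hN1⟩ := Metric.tendsto_atTop.1 h1 ε hε
      obtain ⟨N2, hN2⟩ := Metric.tendsto_atTop.1 hc ε hε
      exact ⟨w (ns (φ (max N1 N2))), H (w (ns (φ (max N1 N2)))), hH _,
        hN1 _ (le_max_left _ _), hN2 _ (le_max_right _ _)⟩
    have hcHa : c = H a := (huniq a (H a) c (hH a) hRac).symm
    rw [hcHa] at hc
    exact hc
  let e : X ≃ Y := ⟨H, K, hleft, hright⟩
  have hconte : Continuous e := hcont
  refine ⟨Continuous.homeoOfEquivCompactToT2 (f := e) hconte, fun a => ?_⟩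
  exact hHf a
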